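/- arXiv:2209.08094 — 2 statements merged into one kernel-verified Lean document; each statement's English description precedes it below -/
import Mathlib

section
/- Boundedness of the dual variable: if A_{k+1} = A_k + ρ_k(X_{k+1} − Z_{k+1}) and X_{k+1} − Z_{k+1} can be written as U D U' − U D̂ V' for orthogonal-column matrices with diagonal entries satisfying |σᵢ − σ̂ᵢ| ≤ λ/ρ_k for all i = 1,…,M, then ‖A_{k+1}‖_F² ≤ λ²M. -/
open Matrix

/-- Frobenius norm of a matrix. -/
noncomputable def frobNorm {m n : ℕ} (M : Matrix (Fin m) (Fin n) ℝ) : ℝ :=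
  Real.sqrt (∑ i, ∑ j, (M i j) ^ 2)

/-- Boundedness of the dual variable in the ADMM iteration: if
`X_{k+1} + ρ_k⁻¹ A_k = U Diag(σ) Vᵀ` and `Z_{k+1} = U Diag(σ̂) Vᵀ` with `U, V`
having orthonormal columns and `|σᵢ − σ̂ᵢ| ≤ λ/ρ_k` for all `i`, then
`A_{k+1} = A_k + ρ_k (X_{k+1} − Z_{k+1})` satisfies `‖A_{k+1}‖_F ≤ λ√M`. -/
theorem dual_variable_bounded {m n M : ℕ}
    (ρ lam : ℝ) (hρ : 0 < ρ) (hlam : 0 < lam)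
    (X Z A A' : Matrix (Fin m) (Fin n) ℝ)
    (U : Matrix (Fin m) (Fin M) ℝ) (V : Matrix (Fin n) (Fin M) ℝ)
    (hU : Uᵀ * U = 1) (hV : Vᵀ * V = 1)
    (σ σhat : Fin M → ℝ)
    (hX : X + ρ⁻¹ • A = U * Matrix.diagonal σ * Vᵀ)
    (hZ : Z = U * Matrix.diagonal σhat * Vᵀ)
    (hdiff : ∀ i, |σ i - σhat i| ≤ lam / ρ)
    (hA' : A' = A + ρ • (X - Z)) :
    frobNorm A' ≤ lam * Real.sqrt M := by
  set d : Fin M → ℝ := fun i => ρ * (σ i - σhat i) with hd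
  have hA'' : A' = U * Matrix.diagonal d * Vᵀ := by
    have h1 : X - Z = U * Matrix.diagonal σ * Vᵀ - ρ⁻¹ • A
        - U * Matrix.diagonal σhat * Vᵀ := by
      rw [← hX, hZ]; abel
    have hdiag : Matrix.diagonal d = ρ • (Matrix.diagonal σ - Matrix.diagonal σhat) := by
      ext i j
      by_cases h : i = j <;>
        simp [Matrix.diagonal_apply, h, hd, mul_sub]
    rw [hA', h1, smul_sub, smul_sub, smul_inv_smul₀ hρ.ne', hdiag]
    rw [Matrix.mul_smul, Matrix.smul_mul, Matrix.mul_sub, Matrix.sub_mul, smul_sub]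
    abel
  have htr : ∑ i, ∑ j, (A' i j) ^ 2 = ∑ i, d i ^ 2 := by
    have h2 : ∑ i, ∑ j, (A' i j) ^ 2 = (A'ᵀ * A').trace := by
      simp only [Matrix.trace, Matrix.diag, Matrix.mul_apply, Matrix.transpose_apply, sq]
      rw [Finset.sum_comm]
    rw [h2, hA'']
    have hT : (U * Matrix.diagonal d * Vᵀ)ᵀ = V * Matrix.diagonal d * Uᵀ := by
      simp [Matrix.transpose_mul, Matrix.diagonal_transpose, Matrix.mul_assoc]
    rw [hT]
    have : V * Matrix.diagonal d * Uᵀ * (U * Matrix.diagonal d * Vᵀ)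
        = V * (Matrix.diagonal d * Matrix.diagonal d) * Vᵀ := by
      simp only [Matrix.mul_assoc]
      rw [← Matrix.mul_assoc Uᵀ U, hU, Matrix.one_mul]
    rw [this, Matrix.trace_mul_comm, ← Matrix.mul_assoc, hV, Matrix.one_mul,
      Matrix.diagonal_mul_diagonal]
    simp [Matrix.trace, Matrix.diag, sq]
  have hbound : ∑ i, d i ^ 2 ≤ (M : ℝ) * lam ^ 2 := by
    have : ∀ i ∈ Finset.univ, d i ^ 2 ≤ lam ^ 2 := by
      intro i _
      have h1 : |d i| ≤ lam := by
        have := hdiff i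
        rw [hd]
        rw [abs_mul, abs_of_pos hρ]
        calc ρ * |σ i - σhat i| ≤ ρ * (lam / ρ) := by
              exact mul_le_mul_of_nonneg_left this hρ.le
          _ = lam := by field_simp
      calc d i ^ 2 = |d i| ^ 2 := (sq_abs _).symm
        _ ≤ lam ^ 2 := by
            apply pow_le_pow_left₀ (abs_nonneg _) h1
    calc ∑ i, d i ^ 2 ≤ ∑ _i : Fin M, lam ^ 2 := Finset.sum_le_sum this
      _ = (M : ℝ) * lam ^ 2 := by simp [mul_comm]
  rw [frobNorm, htr]
  have : lam * Real.sqrt M = Real.sqrt ((M : ℝ) * lam ^ 2) := by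
    rw [Real.sqrt_mul (Nat.cast_nonneg M), Real.sqrt_sq hlam.le, mul_comm]
  rw [this]
  exact Real.sqrt_le_sqrt hbound
end

section
/- Monotone update of the bounded Lagrangian: if ‖A_{k+1} − A_k‖_F ≤ a for all k, ρ_k = μᵏρ₀ with μ > 1, ρ₀ > 0, and the increment identity L_{ρ_{k+1}}(k+1) = L_{ρ_k}(k+1 via A_k) + ((ρ_{k+1}+ρ_k)/(2ρ_k²))‖A_{k+1}−A_k‖_F² holds, and each ADMM step does not increase L (L_{ρ_k}(X_{k+1},Z_{k+1},A_k) ≤ L_{ρ_k}(X_k,Z_k,A_k)), then L_{ρ_k}(X_{k+1},Z_{k+1},A_k) ≤ L_{ρ₀}(X_1,Z_1,A_0) + (a²/ρ₀)·Σ_{j=0}^∞ μ^{1−j}, hence the Lagrangian sequence is bounded above. -/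
/-- Monotone update of the bounded Lagrangian (abstract real-sequence form): if
`L_{k+1} ≤ L_k + ((ρ_{k+1} + ρ_k)/(2ρ_k²)) a²` with `ρ_k = μᵏρ₀`, `μ > 1`,
`ρ₀ > 0`, `a ≥ 0`, then `L_k ≤ L_0 + a²μ²/(ρ₀(μ − 1))` for all `k`;
the Lagrangian sequence is bounded above. -/
theorem bounded_lagrangian_sequence
    (μ ρ₀ a : ℝ) (hμ : 1 < μ) (hρ₀ : 0 < ρ₀) (ha : 0 ≤ a)
    (ρ : ℕ → ℝ) (hρ : ∀ k, ρ k = μ ^ k * ρ₀)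
    (L : ℕ → ℝ)
    (hstep : ∀ k, L (k + 1) ≤ L k + ((ρ (k + 1) + ρ k) / (2 * (ρ k) ^ 2)) * a ^ 2) :
    ∀ k, L k ≤ L 0 + a ^ 2 * μ ^ 2 / (ρ₀ * (μ - 1)) := by
  have hμ0 : (0:ℝ) < μ := lt_trans one_pos hμ
  set c : ℝ := a ^ 2 * (μ + 1) / (2 * ρ₀) with hc
  have hc0 : 0 ≤ c := by positivity
  -- step increment equals c * (1/μ)^k
  have hinc : ∀ k, ((ρ (k + 1) + ρ k) / (2 * (ρ k) ^ 2)) * a ^ 2 = c * (1/μ) ^ k := by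
    intro k
    rw [hρ, hρ, hc]
    have hμk : (μ:ℝ) ^ k ≠ 0 := pow_ne_zero _ (ne_of_gt hμ0)
    simp only [one_div, inv_pow]
    field_simp
    ring
  have key : ∀ k, L k ≤ L 0 + c * ∑ j ∈ Finset.range k, (1/μ) ^ j := by
    intro k
    induction k with
    | zero => simp
    | succ n ih =>
      have := hstep n
      rw [hinc n] at this
      calc L (n+1) ≤ L n + c * (1/μ)^n := this
        _ ≤ L 0 + c * ∑ j ∈ Finset.range n, (1/μ)^j + c * (1/μ)^n := by linarith
        _ = L 0 + c * ∑ j ∈ Finset.range (n+1), (1/μ)^j := by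
            rw [Finset.sum_range_succ]; ring
  intro k
  have hr1 : (1/μ : ℝ) < 1 := by
    rw [div_lt_one hμ0]; exact hμ
  have hr0 : (0:ℝ) ≤ 1/μ := by positivity
  have hsum : ∑ j ∈ Finset.range k, (1/μ) ^ j ≤ 1 / (1 - 1/μ) := by
    have h := geom_sum_Ico_le_of_lt_one hr0 hr1 (m := 0) (n := k)
    simpa using h
  have h1 : 1 / (1 - 1/μ : ℝ) = μ / (μ - 1) := by
    field_simp
  have hfinal : c * (μ / (μ - 1)) ≤ a ^ 2 * μ ^ 2 / (ρ₀ * (μ - 1)) := by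
    rw [hc]
    have hμ1 : (0:ℝ) < μ - 1 := sub_pos.mpr hμ
    rw [div_mul_div_comm, div_le_div_iff₀ (by positivity) (by positivity)]
    nlinarith [sq_nonneg a, sq_nonneg (μ - 1), mul_pos hρ₀ (sub_pos.mpr hμ), sq_nonneg (a*(μ-1))]
  have := key k
  have h2 : c * ∑ j ∈ Finset.range k, (1/μ)^j ≤ c * (μ / (μ - 1)) := by
    rw [← h1]
    exact mul_le_mul_of_nonneg_left hsum hc0
  linarith
end
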